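/- Let R, T₀, I₀ > 0 and let u, n > 0, i ∈ ℝ. Then the matrix G = R·[[n/u², 0, −1/u], [0, 2/(n·I₀²), −2i/(n²·I₀²)], [−1/u, −2i/(n²·I₀²), (1/n)·(1 + 2i²/(I₀²·n²))]] is symmetric and positive semidefinite, and its kernel is exactly the one-dimensional span of the vector (u, i, n). (The Hessian metric of the ideal paramagnetic solid is degenerate with null space spanned by the Euler vector field.) -/

import Mathlib

open Matrix

/-- The Hessian matrix of `−S` for the ideal paramagnetic solid at a point
`(u, i, n)` with `u, n > 0`, where the entropy is
`S(u,i,n) = n·R·(log(u/(n·R·T₀)) − i²/(n²·I₀²))`: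
`G = R·[[n/u², 0, −1/u], [0, 2/(n·I₀²), −2i/(n²·I₀²)],
[−1/u, −2i/(n²·I₀²), (1/n)·(1 + 2i²/(I₀²·n²))]]`. -/
noncomputable def paramagneticHessianMatrix (R I₀ u i n : ℝ) : Matrix (Fin 3) (Fin 3) ℝ :=
  R • !![n / u ^ 2, 0, -1 / u;
         0, 2 / (n * I₀ ^ 2), -2 * i / (n ^ 2 * I₀ ^ 2);
         -1 / u, -2 * i / (n ^ 2 * I₀ ^ 2), (1 / n) * (1 + 2 * i ^ 2 / (I₀ ^ 2 * n ^ 2))]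

/-- **The Hessian metric of the ideal paramagnetic solid is degenerate with
null space spanned by the Euler vector field.** For `R, T₀, I₀ > 0`, `u, n > 0`
and `i ∈ ℝ`, the matrix `G` is symmetric and positive semidefinite, and its
kernel is exactly the span of the Euler vector `(u, i, n)`. -/
theorem paramagnetic_hessian_psd_kernel
    (R T₀ I₀ u i n : ℝ) (hR : 0 < R) (hT₀ : 0 < T₀) (hI₀ : 0 < I₀)
    (hu : 0 < u) (hn : 0 < n) :
    (paramagneticHessianMatrix R I₀ u i n).IsSymm ∧
    (∀ x : Fin 3 → ℝ, 0 ≤ x ⬝ᵥ (paramagneticHessianMatrix R I₀ u i n).mulVec x) ∧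
    (∀ x : Fin 3 → ℝ,
      (paramagneticHessianMatrix R I₀ u i n).mulVec x = 0 ↔
        ∃ t : ℝ, x = t • ![u, i, n]) := by
  have hu' := hu.ne'
  have hn' := hn.ne'
  have hI' := hI₀.ne'
  have hR' := hR.ne'
  refine ⟨?_, ?_, ?_⟩
  · ext a b
    fin_cases a <;> fin_cases b <;>
      simp [paramagneticHessianMatrix, Matrix.transpose_apply]
  · intro x
    have key : x ⬝ᵥ (paramagneticHessianMatrix R I₀ u i n).mulVec x =
        R * ((n / u ^ 2) * (x 0 - u * x 2 / n) ^ 2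
          + (2 / (n * I₀ ^ 2)) * (x 1 - i * x 2 / n) ^ 2) := by
      simp [paramagneticHessianMatrix, Matrix.mulVec, dotProduct,
        Fin.sum_univ_three]
      field_simp
      ring
    rw [key]
    positivity
  · intro x
    constructor
    · intro h
      have h0 := congrFun h 0
      have h1 := congrFun h 1
      simp [paramagneticHessianMatrix, Matrix.mulVec, dotProduct,
        Fin.sum_univ_three] at h0 h1
      field_simp at h0 h1
      refine ⟨x 2 / n, ?_⟩
      funext a
      fin_cases a
      · show x 0 = x 2 / n * u
        field_simp
        apply mul_left_cancel₀ (mul_ne_zero hR' hu')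
        linear_combination u * h0
      · show x 1 = x 2 / n * i
        field_simp
        apply mul_left_cancel₀ (mul_ne_zero (mul_ne_zero hR' hn')
          (mul_ne_zero (pow_ne_zero 2 hI') (by norm_num : (2:ℝ) ≠ 0)))
        linear_combination (n * I₀ ^ 2) * h1
      · show x 2 = x 2 / n * n
        field_simp
    · rintro ⟨t, rfl⟩
      funext a
      fin_cases a <;>
        · simp [paramagneticHessianMatrix, Matrix.mulVec, dotProduct,
            Fin.sum_univ_three]
          field_simp
          ring
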